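/- arXiv:2005.04284 — 4 statements merged into one kernel-verified Lean document; each statement's English description precedes it below -/
import Mathlib

section
/- For every partition λ of a positive integer n, the Gini index of λ equals the second elementary symmetric polynomial of the conjugate partition: g(λ) = e₂(λ̃). -/
open Finset

/-- The conjugate partition: `conjugatePart lam j` is the number of indices `i`
with `lam i ≥ j + 1`, i.e., the `(j+1)`-st part of the conjugate of `lam`
(padded to length `n`). -/
def conjugatePart {n : ℕ} (lam : Fin n → ℕ) (j : Fin n) : ℕ :=
  (Finset.univ.filter fun i : Fin n => (j : ℕ) + 1 ≤ lam i).card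

/-- For every partition `lam` of a positive integer `n` (padded with zeros to
length `n`), the Gini index `g(λ) = C(n+1,2) − Σᵢ i·λᵢ` equals the second elementary
symmetric polynomial of the conjugate partition, `e₂(λ̃)`. -/
theorem gini_stmt1 (n : ℕ) (hn : 0 < n) (lam : Fin n → ℕ)
    (hanti : ∀ i j : Fin n, i ≤ j → lam j ≤ lam i)
    (hsum : ∑ i, lam i = n) :
    ((n + 1).choose 2 : ℤ) - ∑ i : Fin n, (((i : ℕ) + 1) * lam i : ℤ)
      = ((∑ i : Fin n, ∑ j ∈ Finset.Ioi i,
          conjugatePart lam i * conjugatePart lam j : ℕ) : ℤ) := by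
  set c : Fin n → ℕ := conjugatePart lam with hc
  -- generic counting lemma: card {j : Fin n | j.val < m} = m for m ≤ n
  have hcount : ∀ m : ℕ, m ≤ n → (univ.filter fun j : Fin n => (j:ℕ) < m).card = m := by
    intro m hm
    rw [Finset.card_filter, Fin.sum_univ_eq_sum_range (fun k => if k < m then 1 else 0)]
    rw [← Finset.sum_filter]
    have : (range n).filter (fun k => k < m) = range m := by
      ext k; simp only [mem_filter, mem_range]; omega
    rw [this, Finset.sum_const, card_range, smul_eq_mul, mul_one]
  -- each part bounded by n
  have hlam_le : ∀ i : Fin n, lam i ≤ n := by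
    intro i
    calc lam i ≤ ∑ i, lam i := Finset.single_le_sum (fun _ _ => Nat.zero_le _) (mem_univ i)
    _ = n := hsum
  -- c j ≤ n
  have hcle : ∀ j : Fin n, c j ≤ n := by
    intro j
    have := Finset.card_filter_le (univ : Finset (Fin n)) (fun i : Fin n => (j:ℕ)+1 ≤ lam i)
    simpa [hc, conjugatePart] using this
  -- membership characterization of S_j
  have hmem : ∀ (j : Fin n) (i : Fin n),
      ((j:ℕ) + 1 ≤ lam i) ↔ (i:ℕ) < c j := by
    intro j i
    set S := univ.filter (fun i : Fin n => (j:ℕ)+1 ≤ lam i) with hS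
    have hdc : ∀ a b : Fin n, a ≤ b → b ∈ S → a ∈ S := by
      intro a b hab hb
      simp only [hS, mem_filter, mem_univ, true_and] at *
      exact le_trans hb (hanti a b hab)
    have hmem' : i ∈ S ↔ (i:ℕ) < S.card := by
      constructor
      · intro hi
        have hsub : (univ.filter fun a : Fin n => a ≤ i) ⊆ S := fun a ha => by
          simp only [mem_filter, mem_univ, true_and] at ha
          exact hdc a i ha hi
        have h1 := card_le_card hsub
        have hc2 : (univ.filter fun a : Fin n => a ≤ i).card = (i:ℕ)+1 := by
          have : (univ.filter fun a : Fin n => a ≤ i) = Finset.Iic i := by ext a; simp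
          rw [this, Fin.card_Iic]
        omega
      · intro hi
        by_contra hni
        have hsub : S ⊆ univ.filter fun a : Fin n => a < i := fun a ha => by
          simp only [mem_filter, mem_univ, true_and]
          by_contra h
          exact hni (hdc i a (le_of_not_gt h) ha)
        have h1 := card_le_card hsub
        have hc2 : (univ.filter fun a : Fin n => a < i).card = (i:ℕ) := by
          have : (univ.filter fun a : Fin n => a < i) = Finset.Iio i := by ext a; simp
          rw [this, Fin.card_Iio]
        omega
    simpa [hS, mem_filter, hc, conjugatePart] using hmem'
  -- the filters agree: j+1 ≤ m ↔ j < m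
  have hfeq : ∀ m : ℕ, (univ.filter fun j : Fin n => (j:ℕ)+1 ≤ m)
      = (univ.filter fun j : Fin n => (j:ℕ) < m) := by
    intro m; ext j
    simp only [mem_filter, mem_univ, true_and]
    omega
  -- sum of conjugate parts = n
  have hcsum : ∑ j, c j = n := by
    have h1 : ∑ j : Fin n, c j = ∑ j : Fin n, ∑ i : Fin n, if (j:ℕ)+1 ≤ lam i then 1 else 0 := by
      refine Finset.sum_congr rfl fun j _ => ?_
      rw [hc, conjugatePart, Finset.card_filter]
    rw [h1, Finset.sum_comm]
    have h2 : ∀ i : Fin n, ∑ j : Fin n, (if (j:ℕ)+1 ≤ lam i then 1 else 0) = lam i := by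
      intro i
      rw [← Finset.card_filter, hfeq, hcount _ (hlam_le i)]
    rw [Finset.sum_congr rfl fun i _ => h2 i, hsum]
  -- key: 2 * weighted sum = ∑ (c j + 1) * c j
  have hT : 2 * (∑ i : Fin n, ((i:ℕ)+1) * lam i) = ∑ j, (c j + 1) * c j := by
    have h1 : ∀ i : Fin n, ((i:ℕ)+1) * lam i
        = ∑ j : Fin n, if (j:ℕ)+1 ≤ lam i then ((i:ℕ)+1) else 0 := by
      intro i
      rw [← Finset.sum_filter, Finset.sum_const, smul_eq_mul]
      rw [hfeq, hcount _ (hlam_le i), mul_comm]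
    rw [Finset.sum_congr rfl fun i _ => h1 i, Finset.sum_comm, Finset.mul_sum]
    refine Finset.sum_congr rfl fun j _ => ?_
    have h2 : ∑ i : Fin n, (if (j:ℕ)+1 ≤ lam i then (i:ℕ)+1 else 0)
        = ∑ i : Fin n, (if (i:ℕ) < c j then (i:ℕ)+1 else 0) := by
      refine Finset.sum_congr rfl fun i _ => ?_
      exact if_congr (hmem j i) rfl rfl
    rw [h2, Fin.sum_univ_eq_sum_range (fun k => if k < c j then k+1 else 0), ← Finset.sum_filter]
    have heq : (range n).filter (fun k => k < c j) = range (c j) := by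
      ext k; simp only [mem_filter, mem_range]; have := hcle j; omega
    rw [heq]
    have h3 : (∑ k ∈ range (c j), (k+1)) = ∑ i ∈ range (c j + 1), i := by
      rw [Finset.sum_range_succ' (fun i => i) (c j)]
      simp
    rw [h3, mul_comm, Finset.sum_range_id_mul_two]
    simp
  -- key: 2 * e₂ = ∑ (n - c i) * c i
  have hE : 2 * (∑ i : Fin n, ∑ j ∈ Ioi i, c i * c j) = ∑ i, (n - c i) * c i := by
    have h := Finset.sum_sum_Ioi_add_eq_sum_sum_off_diag (fun a b : Fin n => c a * c b)
    have h1 : 2 * (∑ i : Fin n, ∑ j ∈ Ioi i, c i * c j)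
        = ∑ i : Fin n, ∑ j ∈ Ioi i, (c j * c i + c i * c j) := by
      rw [Finset.mul_sum]
      refine Finset.sum_congr rfl fun i _ => ?_
      rw [Finset.mul_sum]
      refine Finset.sum_congr rfl fun j _ => ?_
      ring
    rw [h1]
    have h2 : ∑ i : Fin n, ∑ j ∈ ({i}ᶜ : Finset (Fin n)), c j * c i
        = ∑ i, (n - c i) * c i := by
      refine Finset.sum_congr rfl fun i _ => ?_
      rw [← Finset.sum_mul]
      congr 1
      have hsplit : (∑ j ∈ ({i}ᶜ : Finset (Fin n)), c j) + ∑ j ∈ {i}, c j = n := by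
        rw [Finset.sum_compl_add_sum, hcsum]
      simp only [Finset.sum_singleton] at hsplit
      have := hcle i
      omega
    rw [← h2]
    convert h using 3
  -- combine in ℕ
  have hcomb : 2 * (∑ i : Fin n, ((i:ℕ)+1) * lam i)
      + 2 * (∑ i : Fin n, ∑ j ∈ Ioi i, c i * c j) = (n+1) * n := by
    rw [hT, hE, ← Finset.sum_add_distrib]
    have h1 : ∀ j : Fin n, (c j + 1) * c j + (n - c j) * c j = (n+1) * c j := by
      intro j
      rw [← add_mul]
      congr 1
      have := hcle j
      omega
    rw [Finset.sum_congr rfl fun j _ => h1 j, ← Finset.mul_sum, hcsum]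
  have hch : (n+1).choose 2 * 2 = (n+1) * n := by
    rw [Nat.choose_two_right]
    simp only [Nat.add_sub_cancel]
    refine Nat.div_mul_cancel ?_
    rw [mul_comm]
    exact (Nat.even_mul_succ_self n).two_dvd
  have hfin : (n+1).choose 2
      = (∑ i : Fin n, ((i:ℕ)+1) * lam i) + (∑ i : Fin n, ∑ j ∈ Ioi i, c i * c j) := by
    omega
  rw [hfin]
  push_cast
  ring
end

section
/- Let λ and μ be partitions of a positive integer n. If μ strictly precedes λ in the dominance order (μ ≺ λ), then g(μ) < g(λ) and e₂(λ) < e₂(μ). -/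
open Finset

/-- Abel summation in the form we need: if the total sum of `d` vanishes, then
a weighted sum can be written via differences of weights times partial sums. -/
private lemma abel_eq (n : ℕ) (c d : ℕ → ℤ)
    (hTn : ∑ i ∈ Finset.range n, d i = 0) :
    ∑ i ∈ Finset.range n, c i * d i
      = ∑ i ∈ Finset.range (n - 1),
          (c i - c (i + 1)) * ∑ j ∈ Finset.range (i + 1), d j := by
  have h := Finset.sum_range_by_parts c d n
  simp only [smul_eq_mul] at h
  rw [h, hTn, mul_zero, zero_sub, ← Finset.sum_neg_distrib]
  exact Finset.sum_congr rfl fun i _ => by ring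

/-- The Gini index of a partition of `n` padded with zeros to length `n`:
`g(λ) = C(n+1,2) − Σ_{i=1}^{n} i·λᵢ`. -/
def giniIndex (n : ℕ) (lam : Fin n → ℕ) : ℤ :=
  ((n + 1).choose 2 : ℤ) - ∑ i : Fin n, (((i : ℕ) + 1) * lam i : ℤ)

/-- The second elementary symmetric polynomial of the parts:
`e₂(λ) = Σ_{i < j} λᵢ λⱼ`. -/
def eTwo (n : ℕ) (lam : Fin n → ℕ) : ℕ :=
  ∑ i : Fin n, ∑ j ∈ Finset.Ioi i, lam i * lam j

/-- The dominance order: `dominance n mu lam` means `μ ⪯ λ`, i.e.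
`Σ_{i=1}^{k} μᵢ ≤ Σ_{i=1}^{k} λᵢ` for all `k`. -/
def dominance (n : ℕ) (mu lam : Fin n → ℕ) : Prop :=
  ∀ k : ℕ, ∑ i ∈ Finset.univ.filter (fun i : Fin n => (i : ℕ) < k), mu i
    ≤ ∑ i ∈ Finset.univ.filter (fun i : Fin n => (i : ℕ) < k), lam i

private lemma two_eTwo (n : ℕ) (f : Fin n → ℕ) (hsum : ∑ i, f i = n) :
    (2 * eTwo n f : ℤ) = (n : ℤ) ^ 2 - ∑ i : Fin n, (f i : ℤ) ^ 2 := by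
  have h := Finset.sum_sum_Ioi_add_eq_sum_sum_off_diag
    (fun i j : Fin n => (f i : ℤ) * (f j : ℤ))
  have hL : ∑ i : Fin n, ∑ j ∈ Finset.Ioi i,
      ((f j : ℤ) * f i + (f i : ℤ) * f j) = 2 * eTwo n f := by
    have hinner : ∀ i : Fin n, ∑ j ∈ Finset.Ioi i, ((f j : ℤ) * f i + (f i : ℤ) * f j)
        = 2 * ∑ j ∈ Finset.Ioi i, (f i : ℤ) * f j := by
      intro i
      rw [Finset.mul_sum]
      exact Finset.sum_congr rfl fun j _ => by ring
    rw [Finset.sum_congr rfl fun i _ => hinner i, ← Finset.mul_sum]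
    push_cast [eTwo]
    ring
  have hR : ∑ i : Fin n, ∑ j ∈ ({i}ᶜ : Finset (Fin n)),
      ((f j : ℤ) * f i) = (n : ℤ) ^ 2 - ∑ i : Fin n, (f i : ℤ) ^ 2 := by
    have hs : (∑ i : Fin n, (f i : ℤ)) = (n : ℤ) := by
      exact_mod_cast congrArg (Nat.cast : ℕ → ℤ) hsum
    have : ∀ i : Fin n, ∑ j ∈ ({i}ᶜ : Finset (Fin n)), ((f j : ℤ) * f i)
        = (n : ℤ) * f i - (f i : ℤ) ^ 2 := by
      intro i
      have := Finset.sum_compl_add_sum ({i} : Finset (Fin n))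
        (fun j => (f j : ℤ) * f i)
      rw [Finset.sum_singleton] at this
      have h2 : ∑ j : Fin n, ((f j : ℤ) * f i) = (n : ℤ) * f i := by
        rw [← Finset.sum_mul, hs]
      rw [← h2]
      have := this.symm
      rw [h2] at this
      linarith [this]
    rw [Finset.sum_congr rfl (fun i _ => this i), Finset.sum_sub_distrib,
      ← Finset.mul_sum, hs]
    ring
  rw [← hL, h]
  convert hR using 2

/-- If `μ` and `λ` are partitions of a positive integer `n` with `μ ≺ λ`
in the dominance order, then `g(μ) < g(λ)` and `e₂(λ) < e₂(μ)`. -/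
theorem gini_stmt2 (n : ℕ) (hn : 0 < n) (lam mu : Fin n → ℕ)
    (hlam_anti : ∀ i j : Fin n, i ≤ j → lam j ≤ lam i)
    (hlam_sum : ∑ i, lam i = n)
    (hmu_anti : ∀ i j : Fin n, i ≤ j → mu j ≤ mu i)
    (hmu_sum : ∑ i, mu i = n)
    (hdom : dominance n mu lam) (hne : mu ≠ lam) :
    giniIndex n mu < giniIndex n lam ∧ eTwo n lam < eTwo n mu := by
  classical
  set L : ℕ → ℤ := fun i => if h : i < n then (lam ⟨i, h⟩ : ℤ) else 0 with hLdef
  set M : ℕ → ℤ := fun i => if h : i < n then (mu ⟨i, h⟩ : ℤ) else 0 with hMdef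
  set d : ℕ → ℤ := fun i => L i - M i with hddef
  -- bridge between range sums and filtered Fin sums
  have key : ∀ (f : Fin n → ℕ) (k : ℕ),
      ∑ i ∈ Finset.range k, (if h : i < n then (f ⟨i, h⟩ : ℤ) else 0)
        = ((∑ i ∈ Finset.univ.filter (fun i : Fin n => (i : ℕ) < k), f i : ℕ) : ℤ) := by
    intro f k
    push_cast
    rw [Finset.sum_filter]
    have h1 : (∑ i : Fin n, if (i : ℕ) < k then (f i : ℤ) else 0)
        = ∑ i ∈ Finset.range n,
            (if i < k then (if h : i < n then (f ⟨i, h⟩ : ℤ) else 0) else 0) := by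
      rw [← Fin.sum_univ_eq_sum_range
        (fun i => if i < k then (if h : i < n then (f ⟨i, h⟩ : ℤ) else 0) else 0) n]
      refine Finset.sum_congr rfl fun i _ => ?_
      rw [dif_pos i.isLt]
    rw [h1]
    rcases le_total k n with hkn | hnk
    · rw [← Finset.sum_subset (Finset.range_subset_range.mpr hkn)
        (fun x _ hx => by rw [if_neg (by simpa using hx)])]
      refine Finset.sum_congr rfl fun i hi => ?_
      rw [if_pos (Finset.mem_range.mp hi)]
    · rw [← Finset.sum_subset (Finset.range_subset_range.mpr hnk)
        (fun x _ hx => by rw [dif_neg (by simpa using hx)])]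
      refine Finset.sum_congr rfl fun i hi => ?_
      rw [if_pos (lt_of_lt_of_le (Finset.mem_range.mp hi) hnk)]
  have hT0 : ∀ k, 0 ≤ ∑ i ∈ Finset.range k, d i := by
    intro k
    have := hdom k
    have hcast : ((∑ i ∈ Finset.univ.filter (fun i : Fin n => (i : ℕ) < k), mu i : ℕ) : ℤ)
        ≤ ((∑ i ∈ Finset.univ.filter (fun i : Fin n => (i : ℕ) < k), lam i : ℕ) : ℤ) := by
      exact_mod_cast this
    simp only [hddef, Finset.sum_sub_distrib, key lam k, key mu k]
    simp only [hLdef, hMdef, key lam k, key mu k]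
    linarith
  have hfull : ∀ (f : Fin n → ℕ), (∑ i, f i = n) →
      ∑ i ∈ Finset.range n, (if h : i < n then (f ⟨i, h⟩ : ℤ) else 0) = (n : ℤ) := by
    intro f hf
    rw [key f n]
    have : Finset.univ.filter (fun i : Fin n => (i : ℕ) < n) = Finset.univ := by
      apply Finset.filter_true_of_mem; intro i _; exact i.isLt
    rw [this, hf]
  have hTn : ∑ i ∈ Finset.range n, d i = 0 := by
    simp only [hddef, Finset.sum_sub_distrib]
    rw [hfull lam hlam_sum, hfull mu hmu_sum]
    ring
  -- there is an index where they differ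
  have hdne : ∃ i, d i ≠ 0 := by
    have : ∃ i : Fin n, mu i ≠ lam i := by
      by_contra h
      push_neg at h
      exact hne (funext h)
    obtain ⟨i, hi⟩ := this
    refine ⟨(i : ℕ), ?_⟩
    simp only [hddef, hLdef, hMdef, dif_pos i.isLt, Fin.eta]
    intro h
    exact hi (by exact_mod_cast (sub_eq_zero.mp h).symm)
  -- minimal index where they differ
  have hj := Nat.find_spec hdne
  set j := Nat.find hdne with hjdef
  have hjlt : j < n := by
    by_contra h
    push_neg at h
    apply hj
    simp only [hddef, hLdef, hMdef, dif_neg (not_lt.mpr h)]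
    ring
  have hTj : ∑ i ∈ Finset.range (j + 1), d i = d j := by
    rw [Finset.sum_range_succ]
    have : ∑ i ∈ Finset.range j, d i = 0 := by
      apply Finset.sum_eq_zero
      intro i hi
      by_contra h
      exact absurd (Nat.find_le h) (by simpa using Finset.mem_range.mp hi)
    rw [this, zero_add]
  have hdj_pos : 0 < d j := by
    have h0 : 0 ≤ d j := hTj ▸ hT0 (j + 1)
    rcases lt_or_eq_of_le h0 with h | h
    · exact h
    · exact absurd h.symm hj
  have hjn1 : j < n - 1 := by
    rcases lt_or_eq_of_le (Nat.le_sub_one_of_lt hjlt) with h | h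
    · exact h
    · exfalso
      have hn' : j + 1 = n := by omega
      rw [← hn', hTj] at hTn
      exact hj hTn
  -- Gini part
  have hsum_gini : ∀ (f : Fin n → ℕ),
      (∑ i : Fin n, (((i : ℕ) + 1) * f i : ℤ))
        = ∑ i ∈ Finset.range n, ((i : ℤ) + 1) * (if h : i < n then (f ⟨i, h⟩ : ℤ) else 0) := by
    intro f
    rw [← Fin.sum_univ_eq_sum_range
      (fun i => ((i : ℤ) + 1) * (if h : i < n then (f ⟨i, h⟩ : ℤ) else 0)) n]
    refine Finset.sum_congr rfl fun i _ => ?_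
    rw [dif_pos i.isLt]
  have hgini : giniIndex n mu < giniIndex n lam := by
    unfold giniIndex
    have habel : ∑ i ∈ Finset.range n, ((i : ℤ) + 1) * d i
        = ∑ i ∈ Finset.range (n - 1),
            (((i : ℤ) + 1) - ((i : ℤ) + 1 + 1)) * ∑ k ∈ Finset.range (i + 1), d k := by
      exact abel_eq n (fun i => (i : ℤ) + 1) d hTn
    have hneg : ∑ i ∈ Finset.range n, ((i : ℤ) + 1) * d i
        = - ∑ i ∈ Finset.range (n - 1), ∑ k ∈ Finset.range (i + 1), d k := by
      rw [habel, ← Finset.sum_neg_distrib]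
      exact Finset.sum_congr rfl fun i _ => by ring
    have hpos : 0 < ∑ i ∈ Finset.range (n - 1), ∑ k ∈ Finset.range (i + 1), d k := by
      apply Finset.sum_pos'
      · intro i _; exact hT0 (i + 1)
      · exact ⟨j, Finset.mem_range.mpr hjn1, by rw [hTj]; exact hdj_pos⟩
    have hdiff : (∑ i : Fin n, (((i : ℕ) + 1) * lam i : ℤ))
        - (∑ i : Fin n, (((i : ℕ) + 1) * mu i : ℤ))
        = ∑ i ∈ Finset.range n, ((i : ℤ) + 1) * d i := by
      rw [hsum_gini lam, hsum_gini mu, ← Finset.sum_sub_distrib]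
      refine Finset.sum_congr rfl fun i _ => ?_
      simp only [hddef]
      ring
    have : (∑ i : Fin n, (((i : ℕ) + 1) * lam i : ℤ))
        < (∑ i : Fin n, (((i : ℕ) + 1) * mu i : ℤ)) := by
      have := hdiff
      rw [hneg] at this
      linarith
    linarith
  -- e2 part
  refine ⟨hgini, ?_⟩
  have hsq : ∀ (f : Fin n → ℕ),
      (∑ i : Fin n, (f i : ℤ) ^ 2)
        = ∑ i ∈ Finset.range n, (if h : i < n then (f ⟨i, h⟩ : ℤ) else 0) ^ 2 := by
    intro f
    rw [← Fin.sum_univ_eq_sum_range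
      (fun i => (if h : i < n then (f ⟨i, h⟩ : ℤ) else 0) ^ 2) n]
    refine Finset.sum_congr rfl fun i _ => ?_
    rw [dif_pos i.isLt]
  have hManti : ∀ i, M (i + 1) ≤ M i := by
    intro i
    by_cases h : i + 1 < n
    · simp only [hMdef, dif_pos h, dif_pos (Nat.lt_of_succ_lt h)]
      exact_mod_cast hmu_anti ⟨i, Nat.lt_of_succ_lt h⟩ ⟨i + 1, h⟩ (by simp)
    · simp only [hMdef, dif_neg h]
      by_cases h2 : i < n
      · simp only [dif_pos h2]; positivity
      · simp only [dif_neg h2]; exact le_refl 0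
  have hMd_nonneg : 0 ≤ ∑ i ∈ Finset.range n, M i * d i := by
    rw [abel_eq n M d hTn]
    apply Finset.sum_nonneg
    intro i _
    exact mul_nonneg (by linarith [hManti i]) (hT0 (i + 1))
  have hd2_pos : 0 < ∑ i ∈ Finset.range n, d i ^ 2 := by
    apply Finset.sum_pos'
    · intro i _; positivity
    · exact ⟨j, Finset.mem_range.mpr hjlt, by positivity⟩
  have hkey : ∑ i ∈ Finset.range n, M i ^ 2 < ∑ i ∈ Finset.range n, L i ^ 2 := by
    have hexp : ∑ i ∈ Finset.range n, (L i ^ 2 - M i ^ 2)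
        = 2 * (∑ i ∈ Finset.range n, M i * d i) + ∑ i ∈ Finset.range n, d i ^ 2 := by
      rw [Finset.mul_sum, ← Finset.sum_add_distrib]
      refine Finset.sum_congr rfl fun i _ => ?_
      simp only [hddef]
      ring
    rw [Finset.sum_sub_distrib] at hexp
    linarith
  have hmusq : (∑ i : Fin n, (mu i : ℤ) ^ 2) < ∑ i : Fin n, (lam i : ℤ) ^ 2 := by
    rw [hsq lam, hsq mu]
    exact hkey
  have h2l := two_eTwo n lam hlam_sum
  have h2m := two_eTwo n mu hmu_sum
  have : (2 * eTwo n lam : ℤ) < (2 * eTwo n mu : ℤ) := by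
    rw [h2l, h2m]
    linarith
  exact_mod_cast (by linarith : (eTwo n lam : ℤ) < (eTwo n mu : ℤ))
end

section
/- Let λ and μ be distinct partitions of a positive integer n. If g(λ) = g(μ), then λ and μ are incomparable in the dominance order (neither μ ⪯ λ nor λ ⪯ μ). Consequently, every level set {λ ⊢ n : g(λ) = v} of the Gini index is an antichain in the dominance lattice of partitions of n. -/
/-- A partition of `n` padded with zeros to length `n`: a non-increasing
sequence `(λ₁, …, λₙ)` of non-negative integers summing to `n`. -/
structure PaddedPartition (n : ℕ) where
  parts : Fin n → ℕ
  antitone' : ∀ i j : Fin n, i ≤ j → parts j ≤ parts i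
  sum_parts : ∑ i, parts i = n

/-- The Gini index `g(λ) = C(n+1,2) − Σ_{i=1}^{n} i·λᵢ`. -/
def PaddedPartition.gini {n : ℕ} (lam : PaddedPartition n) : ℤ :=
  ((n + 1).choose 2 : ℤ) - ∑ i : Fin n, (((i : ℕ) + 1) * lam.parts i : ℤ)

/-- The dominance order: `μ ⪯ λ` iff `Σ_{i=1}^{k} μᵢ ≤ Σ_{i=1}^{k} λᵢ` for all `k`. -/
def PaddedPartition.Dom {n : ℕ} (mu lam : PaddedPartition n) : Prop :=
  ∀ k : ℕ, ∑ i ∈ Finset.univ.filter (fun i : Fin n => (i : ℕ) < k), mu.parts i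
    ≤ ∑ i ∈ Finset.univ.filter (fun i : Fin n => (i : ℕ) < k), lam.parts i

private def PPpsum {n : ℕ} (f : Fin n → ℕ) (k : ℕ) : ℕ :=
  ∑ i ∈ Finset.univ.filter (fun i : Fin n => (i : ℕ) < k), f i

private lemma PPpsum_succ {n : ℕ} (f : Fin n → ℕ) (k : ℕ) (hk : k < n) :
    PPpsum f (k+1) = PPpsum f k + f ⟨k, hk⟩ := by
  unfold PPpsum
  have h : Finset.univ.filter (fun i : Fin n => (i:ℕ) < k+1)
      = insert ⟨k,hk⟩ (Finset.univ.filter (fun i : Fin n => (i:ℕ) < k)) := by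
    ext i
    simp [Nat.lt_succ_iff_lt_or_eq, Fin.ext_iff, or_comm]
    omega
  rw [h, Finset.sum_insert (by simp)]
  ring

private lemma PPsum_psum {n : ℕ} (f : Fin n → ℕ) :
    ∑ k ∈ Finset.range n, PPpsum f (k+1) = ∑ i : Fin n, (n - (i:ℕ)) * f i := by
  unfold PPpsum
  simp only [Finset.sum_filter]
  rw [Finset.sum_comm]
  refine Finset.sum_congr rfl fun i _ => ?_
  have h1 : ∀ k, (if (i:ℕ) < k+1 then f i else 0) = (if (i:ℕ) ≤ k then f i else 0) := by
    intro k; simp [Nat.lt_succ_iff]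
  simp only [h1, ← Finset.sum_filter]
  rw [Finset.sum_const]
  have h2 : (Finset.range n).filter (fun k => (i:ℕ) ≤ k) = Finset.Ico (i:ℕ) n := by
    ext k; simp [Finset.mem_Ico, and_comm]
  rw [h2, Nat.card_Ico, smul_eq_mul]

private lemma PPkey {n : ℕ} (lam mu : PaddedPartition n)
    (hg : lam.gini = mu.gini) (hd : PaddedPartition.Dom mu lam) : lam = mu := by
  -- from gini equality, ∑ (i+1) parts equal (in ℕ)
  have hg' : ∑ i : Fin n, ((i:ℕ) + 1) * lam.parts i
      = ∑ i : Fin n, ((i:ℕ) + 1) * mu.parts i := by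
    have := hg
    unfold PaddedPartition.gini at this
    have h2 : (∑ i : Fin n, (((i : ℕ) + 1) * lam.parts i : ℤ))
        = ∑ i : Fin n, (((i : ℕ) + 1) * mu.parts i : ℤ) := by linarith
    exact_mod_cast h2
  -- ∑ (n-i) parts equal
  have hsum : ∀ p : PaddedPartition n,
      ∑ i : Fin n, ((n:ℕ) - (i:ℕ)) * p.parts i
        + ∑ i : Fin n, ((i:ℕ) + 1) * p.parts i = (n+1) * n := by
    intro p
    rw [← Finset.sum_add_distrib]
    have : ∀ i : Fin n, (n - (i:ℕ)) * p.parts i + ((i:ℕ) + 1) * p.parts i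
        = (n+1) * p.parts i := by
      intro i
      have : (i:ℕ) < n := i.isLt
      have : n - (i:ℕ) + ((i:ℕ) + 1) = n + 1 := by omega
      calc (n - (i:ℕ)) * p.parts i + ((i:ℕ) + 1) * p.parts i
          = (n - (i:ℕ) + ((i:ℕ) + 1)) * p.parts i := by ring
        _ = (n+1) * p.parts i := by rw [this]
    rw [Finset.sum_congr rfl fun i _ => this i, ← Finset.mul_sum, p.sum_parts]
  have hN : ∑ i : Fin n, ((n:ℕ) - (i:ℕ)) * lam.parts i
      = ∑ i : Fin n, ((n:ℕ) - (i:ℕ)) * mu.parts i := by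
    have := hsum lam; have := hsum mu; omega
  -- sums of partial sums equal
  have hS : ∑ k ∈ Finset.range n, PPpsum mu.parts (k+1)
      = ∑ k ∈ Finset.range n, PPpsum lam.parts (k+1) := by
    rw [PPsum_psum, PPsum_psum, hN]
  -- each partial sum equal
  have hle : ∀ k ∈ Finset.range n, PPpsum mu.parts (k+1) ≤ PPpsum lam.parts (k+1) :=
    fun k _ => hd (k+1)
  have heq : ∀ k ∈ Finset.range n, PPpsum mu.parts (k+1) = PPpsum lam.parts (k+1) := by
    intro k hk
    by_contra hne
    have hlt : PPpsum mu.parts (k+1) < PPpsum lam.parts (k+1) :=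
      lt_of_le_of_ne (hle k hk) hne
    have : ∑ j ∈ Finset.range n, PPpsum mu.parts (j+1)
        < ∑ j ∈ Finset.range n, PPpsum lam.parts (j+1) :=
      Finset.sum_lt_sum hle ⟨k, hk, hlt⟩
    omega
  -- parts equal
  have hparts : lam.parts = mu.parts := by
    funext i
    have hi : (i:ℕ) < n := i.isLt
    have e1 := PPpsum_succ lam.parts i hi
    have e2 := PPpsum_succ mu.parts i hi
    have h3 : PPpsum mu.parts ((i:ℕ)+1) = PPpsum lam.parts ((i:ℕ)+1) :=
      heq i (Finset.mem_range.mpr hi)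
    have h4 : PPpsum mu.parts (i:ℕ) = PPpsum lam.parts (i:ℕ) := by
      rcases Nat.eq_zero_or_pos (i:ℕ) with h0 | h0
      · simp [h0, PPpsum]
      · obtain ⟨j, hj⟩ : ∃ j, (i:ℕ) = j + 1 := ⟨(i:ℕ)-1, by omega⟩
        rw [hj]
        exact heq j (Finset.mem_range.mpr (by omega))
    have h5 : lam.parts ⟨(i:ℕ), hi⟩ = mu.parts ⟨(i:ℕ), hi⟩ := by omega
    simpa using h5
  cases lam; cases mu; simp_all

/-- If `λ` and `μ` are distinct partitions of a positive integer `n` with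
`g(λ) = g(μ)`, then `λ` and `μ` are incomparable in the dominance order.  Consequently,
every level set of the Gini index is an antichain in the dominance lattice. -/
theorem gini_stmt4 (n : ℕ) (hn : 0 < n) :
    (∀ lam mu : PaddedPartition n, lam ≠ mu → lam.gini = mu.gini →
      ¬ PaddedPartition.Dom mu lam ∧ ¬ PaddedPartition.Dom lam mu) ∧
    (∀ v : ℤ, IsAntichain PaddedPartition.Dom
      {lam : PaddedPartition n | lam.gini = v}) := by
  constructor
  · intro lam mu hne hg
    exact ⟨fun hd => hne (PPkey lam mu hg hd),
           fun hd => hne.symm (PPkey mu lam hg.symm hd)⟩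
  · intro v lam hlam mu hmu hne hd
    exact hne (PPkey mu lam (hmu.trans hlam.symm) hd).symm
end

section
/- In the ring of formal power series in x over the polynomial ring ℤ[q], the following identity holds: ∏_{m=1}^{∞} 1/(1 − q^{C(m+1,2)} x^m) − 1 = Σ_{n=1}^{∞} (Σ_{λ ⊢ n} q^{C(n+1,2) − g(λ)}) x^n. Equivalently, for every positive integer n, the coefficient of x^n in the infinite product ∏_{m=1}^{∞} (1 − q^{C(m+1,2)} x^m)^{−1} equals the polynomial Σ_{λ ⊢ n} q^{C(n+1,2) − g(λ)} in q, where the sum ranges over all partitions λ of n. -/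
open scoped Classical

/-- The parts of a partition of `n`, sorted in non-increasing order:
`λ₁ ≥ λ₂ ≥ … ≥ λ_ℓ`. -/
def sortedParts {n : ℕ} (lam : Nat.Partition n) : List ℕ :=
  lam.parts.sort (· ≥ ·)

/-- The Gini index of a partition of `n`:
`g(λ) = C(n+1,2) − Σ_{i=1}^{n} i·λᵢ` (the parts being padded with zeros to length `n`,
which does not affect the weighted sum). -/
def gini {n : ℕ} (lam : Nat.Partition n) : ℕ :=
  (n + 1).choose 2 -
    ∑ i ∈ Finset.range (sortedParts lam).length, (i + 1) * (sortedParts lam).getD i 0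

/-- The inverse `(1 − q^{C(m+1,2)} x^m)⁻¹` in the power series ring `ℤ[q][[x]]`. -/
noncomputable def ginFactorInv (m : ℕ) : PowerSeries (Polynomial ℤ) :=
  PowerSeries.invOfUnit
    (1 - PowerSeries.C (R := Polynomial ℤ) (Polynomial.X ^ (m + 1).choose 2)
      * PowerSeries.X ^ m) 1

open Finset


noncomputable def ginSeries (m : ℕ) : PowerSeries (Polynomial ℤ) :=
  PowerSeries.mk fun j => if m ∣ j then (Polynomial.X : Polynomial ℤ) ^ ((j / m) * (m + 1).choose 2) else 0

lemma ginmul (m : ℕ) (hm : 0 < m) :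
    (1 - PowerSeries.C (R := Polynomial ℤ) (Polynomial.X ^ (m + 1).choose 2)
      * PowerSeries.X ^ m) * ginSeries m = 1 := by
  ext k : 1
  rw [sub_mul, one_mul, map_sub, mul_assoc]
  rw [PowerSeries.coeff_C_mul]
  rw [PowerSeries.coeff_X_pow_mul']
  rcases eq_or_ne k 0 with rfl | hk
  · simp [ginSeries, hm.ne', hm]
  · rw [PowerSeries.coeff_one, if_neg hk]
    by_cases hd : m ∣ k
    · have hmk : m ≤ k := Nat.le_of_dvd (Nat.pos_of_ne_zero hk) hd
      have hd' : m ∣ k - m := (Nat.dvd_sub hd dvd_rfl)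
      rw [if_pos hmk]
      simp only [ginSeries, PowerSeries.coeff_mk, if_pos hd, if_pos hd']
      rw [← pow_add, sub_eq_zero]
      congr 1
      have h1 : (k - m) / m = k / m - 1 := by
        obtain ⟨c, rfl⟩ := hd
        have h3 : m * c - m = m * (c - 1) := by rw [Nat.mul_sub, mul_one]
        rw [h3, Nat.mul_div_cancel_left _ hm, Nat.mul_div_cancel_left _ hm]
      have h2 : 1 ≤ k / m := Nat.one_le_div_iff hm |>.2 hmk
      rw [h1]
      obtain ⟨e, he⟩ := Nat.exists_eq_add_of_le h2
      rw [he]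
      simp [Nat.add_sub_cancel_left]
      ring
    · simp only [ginSeries, PowerSeries.coeff_mk, if_neg hd]
      rw [zero_sub, neg_eq_zero]
      by_cases hmk : m ≤ k
      · rw [if_pos hmk, if_neg, mul_zero]
        intro h
        refine hd ?_
        have := Nat.dvd_add h (dvd_refl m)
        rwa [Nat.sub_add_cancel hmk] at this
      · rw [if_neg hmk, mul_zero]

lemma ginFactorInv_eq (m : ℕ) (hm : 0 < m) : ginFactorInv m = ginSeries m := by
  have hc : PowerSeries.constantCoeff (R := Polynomial ℤ)
      (1 - PowerSeries.C (R := Polynomial ℤ) (Polynomial.X ^ (m + 1).choose 2)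
        * PowerSeries.X ^ m) = (1 : Units (Polynomial ℤ)) := by
    simp [hm.ne']
  have h1 := PowerSeries.invOfUnit_mul _ _ hc
  calc ginFactorInv m = ginFactorInv m * 1 := by rw [mul_one]
    _ = ginFactorInv m * ((1 - PowerSeries.C (R := Polynomial ℤ) (Polynomial.X ^ (m + 1).choose 2)
        * PowerSeries.X ^ m) * ginSeries m) := by rw [ginmul m hm]
    _ = (ginFactorInv m * (1 - PowerSeries.C (R := Polynomial ℤ) (Polynomial.X ^ (m + 1).choose 2)
        * PowerSeries.X ^ m)) * ginSeries m := by ring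
    _ = ginSeries m := by rw [ginFactorInv]; rw [h1, one_mul]

def padded {n : ℕ} (lam : Nat.Partition n) : ℕ → ℕ := fun i => (sortedParts lam).getD i 0

-- generic list lemma
lemma list_sum_getD (l : List ℕ) : ∑ i ∈ range l.length, l.getD i 0 = l.sum := by
  induction l with
  | nil => simp
  | cons a t ih =>
    rw [List.length_cons, Finset.sum_range_succ', List.sum_cons]
    simp only [List.getD_cons_succ, List.getD_cons_zero]
    rw [ih]; ring

lemma sortedParts_sorted {n : ℕ} (lam : Nat.Partition n) :
    (sortedParts lam).Pairwise (· ≥ ·) := Multiset.pairwise_sort _ _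

lemma padded_antitone {n : ℕ} (lam : Nat.Partition n) : Antitone (padded lam) := by
  intro i j hij
  unfold padded
  by_cases hj : j < (sortedParts lam).length
  · have hi : i < (sortedParts lam).length := lt_of_le_of_lt hij hj
    rw [List.getD_eq_getElem _ _ hj, List.getD_eq_getElem _ _ hi]
    exact (sortedParts_sorted lam).rel_get_of_le (a := ⟨i, hi⟩) (b := ⟨j, hj⟩) (by exact hij)
  · rw [List.getD_eq_default _ _ (not_lt.mp hj)]
    exact Nat.zero_le _

lemma padded_pos_iff {n : ℕ} (lam : Nat.Partition n) (i : ℕ) :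
    0 < padded lam i ↔ i < (sortedParts lam).length := by
  constructor
  · intro h
    by_contra hcon
    rw [padded, List.getD_eq_default _ _ (not_lt.mp hcon)] at h
    exact Nat.lt_irrefl 0 h
  · intro h
    rw [padded, List.getD_eq_getElem _ _ h]
    have : (sortedParts lam)[i] ∈ sortedParts lam := List.getElem_mem _
    exact lam.parts_pos (Multiset.mem_sort _ |>.mp this)

lemma sortedParts_length_le {n : ℕ} (lam : Nat.Partition n) :
    (sortedParts lam).length ≤ n := by
  have h1 : (sortedParts lam).length = Multiset.card lam.parts := by
    rw [sortedParts, ← Multiset.length_sort (· ≥ ·)]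
  rw [h1]
  calc Multiset.card lam.parts = Multiset.card lam.parts • 1 := by simp
    _ ≤ lam.parts.sum := Multiset.card_nsmul_le_sum (fun x hx => lam.parts_pos hx)
    _ = n := lam.parts_sum

lemma padded_eq_zero {n : ℕ} (lam : Nat.Partition n) {i : ℕ} (h : n ≤ i) : padded lam i = 0 := by
  have := (padded_pos_iff lam i).not
  rcases Nat.eq_zero_or_pos (padded lam i) with h0 | h0
  · exact h0
  · have h1 := (padded_pos_iff lam i).mp h0
    have h2 := sortedParts_length_le lam
    omega

lemma padded_sum {n : ℕ} (lam : Nat.Partition n) {L : ℕ} (hL : n ≤ L) :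
    ∑ i ∈ range L, padded lam i = n := by
  have hlen := sortedParts_length_le lam
  rw [← Finset.sum_range_add_sum_Ico _ (le_trans hlen hL)]
  have h2 : ∑ i ∈ Finset.Ico (sortedParts lam).length L, padded lam i = 0 := by
    apply Finset.sum_eq_zero
    intro i hi
    rcases Nat.eq_zero_or_pos (padded lam i) with h0 | h0
    · exact h0
    · have := (padded_pos_iff lam i).mp h0
      rw [Finset.mem_Ico] at hi; omega
  rw [h2, add_zero]
  have h3 : ∑ i ∈ range (sortedParts lam).length, padded lam i
      = ∑ i ∈ range (sortedParts lam).length, (sortedParts lam).getD i 0 := rfl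
  rw [h3, list_sum_getD]
  have h4 : (sortedParts lam : Multiset ℕ).sum = n := by
    rw [sortedParts, Multiset.sort_eq]; exact lam.parts_sum
  rwa [Multiset.sum_coe] at h4

lemma padded_wsum {n : ℕ} (lam : Nat.Partition n) {L : ℕ} (hL : (sortedParts lam).length ≤ L) :
    ∑ i ∈ range L, (i + 1) * padded lam i
      = ∑ i ∈ range (sortedParts lam).length, (i + 1) * (sortedParts lam).getD i 0 := by
  rw [← Finset.sum_range_add_sum_Ico _ hL]
  have h2 : ∑ i ∈ Finset.Ico (sortedParts lam).length L, (i + 1) * padded lam i = 0 := by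
    apply Finset.sum_eq_zero
    intro i hi
    rw [Finset.mem_Ico] at hi
    rw [padded, List.getD_eq_default _ _ hi.1, mul_zero]
  rw [h2, add_zero]
  rfl

lemma gauss (s : ℕ) : ∑ i ∈ range s, (i + 1) = (s + 1).choose 2 := by
  induction s with
  | zero => simp
  | succ s ih =>
    rw [Finset.sum_range_succ, ih, Nat.choose_succ_succ' (s + 1) 1, Nat.choose_one_right]
    ring

lemma abel_w (p : ℕ → ℕ) (hp : Antitone p) (N : ℕ) :
    (∑ m ∈ Finset.Icc 1 N, (p (m - 1) - p m) * (m + 1).choose 2) + p N * (N + 1).choose 2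
      = ∑ i ∈ range N, (i + 1) * p i := by
  induction N with
  | zero => simp
  | succ N ih =>
    rw [Finset.sum_Icc_succ_top (by omega), Finset.sum_range_succ, ← ih]
    have hb : p (N + 1) ≤ p N := hp (by omega)
    have hc : (N + 1 + 1).choose 2 = (N + 1).choose 2 + (N + 1) := by
      rw [Nat.choose_succ_succ' (N + 1) 1, Nat.choose_one_right]; ring
    have key : (p N - p (N + 1)) * (N + 1 + 1).choose 2 + p (N + 1) * (N + 1 + 1).choose 2
        = p N * (N + 1).choose 2 + p N * (N + 1) := by
      rw [Nat.sub_mul, Nat.sub_add_cancel (Nat.mul_le_mul_right _ hb), hc, Nat.mul_add]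
    have : N + 1 - 1 = N := by omega
    have hcomm : (N + 1) * p N = p N * (N + 1) := mul_comm _ _
    rw [this]
    omega

lemma abel_s (p : ℕ → ℕ) (hp : Antitone p) (N : ℕ) :
    (∑ m ∈ Finset.Icc 1 N, m * (p (m - 1) - p m)) + p N * N = ∑ i ∈ range N, p i := by
  induction N with
  | zero => simp
  | succ N ih =>
    rw [Finset.sum_Icc_succ_top (by omega), Finset.sum_range_succ, ← ih]
    have hb : p (N + 1) ≤ p N := hp (by omega)
    have key : (N + 1) * (p N - p (N + 1)) + p (N + 1) * (N + 1)
        = p N * (N + 1) := by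
      rw [Nat.mul_sub, mul_comm (N+1) (p N), mul_comm (N+1) (p (N+1)),
        Nat.sub_add_cancel (Nat.mul_le_mul_right _ hb)]
    have : N + 1 - 1 = N := by omega
    have hcomm : p (N + 1) * (N + 1) = (N + 1) * p (N + 1) := mul_comm _ _
    have h4 : p N * (N + 1) = p N * N + p N := by ring
    rw [this]
    omega

lemma wsum_le (g : ℕ → ℕ) (hg : Antitone g) (L : ℕ) :
    ∑ i ∈ range L, (i + 1) * g i ≤ ((∑ i ∈ range L, g i) + 1).choose 2 := by
  induction L with
  | zero => simp
  | succ L ih =>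
    rw [Finset.sum_range_succ, Finset.sum_range_succ]
    set s := ∑ i ∈ range L, g i with hs
    rcases Nat.eq_zero_or_pos (g L) with h0 | h0
    · simpa [h0] using ih
    · have hL : L ≤ s := by
        have : ∀ i ∈ range L, 1 ≤ g i := fun i hi =>
          le_trans h0 (hg (le_of_lt (Finset.mem_range.mp hi)))
        calc L = ∑ _i ∈ range L, 1 := by simp
          _ ≤ s := Finset.sum_le_sum this
      have key : (s + 1).choose 2 + g L * (L + 1) ≤ (s + g L + 1).choose 2 := by
        rw [← gauss, ← gauss, Finset.sum_range_add]
        have h2 : g L * (L + 1) ≤ ∑ i ∈ range (g L), (s + i + 1) := by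
          calc g L * (L + 1) = ∑ _i ∈ range (g L), (L + 1) := by
                rw [Finset.sum_const, Finset.card_range, smul_eq_mul, mul_comm]
            _ ≤ _ := Finset.sum_le_sum (fun i _ => by omega)
        omega
      have h3 : (L + 1) * g L = g L * (L + 1) := by ring
      omega

lemma padded_inj {n : ℕ} (lam lam' : Nat.Partition n)
    (h : ∀ i, padded lam i = padded lam' i) : lam = lam' := by
  have hlen : (sortedParts lam).length = (sortedParts lam').length := by
    by_contra hne
    rcases Nat.lt_or_ge (sortedParts lam).length (sortedParts lam').length with hlt | hge
    · have h1 : padded lam (sortedParts lam).length = 0 :=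
        List.getD_eq_default _ _ le_rfl
      have h2 : 0 < padded lam' (sortedParts lam).length :=
        (padded_pos_iff lam' _).mpr hlt
      rw [← h _] at h2; omega
    · rcases Nat.lt_or_ge (sortedParts lam').length (sortedParts lam).length with hlt' | hge'
      · have h1 : padded lam' (sortedParts lam').length = 0 :=
          List.getD_eq_default _ _ le_rfl
        have h2 : 0 < padded lam (sortedParts lam').length :=
          (padded_pos_iff lam _).mpr hlt'
        rw [h _] at h2; omega
      · omega
  have hlist : sortedParts lam = sortedParts lam' := by
    apply List.ext_getElem hlen
    intro i h1 h2
    have := h i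
    rwa [padded, padded, List.getD_eq_getElem _ _ h1, List.getD_eq_getElem _ _ h2] at this
  apply Nat.Partition.ext
  rw [← Multiset.sort_eq lam.parts (· ≥ ·), ← Multiset.sort_eq lam'.parts (· ≥ ·)]
  exact congrArg _ hlist

lemma filter_getD (M : List ℕ) (hM : M.Pairwise (· ≥ ·)) (i : ℕ) :
    (M.filter (fun x => x ≠ 0)).getD i 0 = M.getD i 0 := by
  induction M generalizing i with
  | nil => simp
  | cons a t ih =>
    by_cases ha : a = 0
    · subst ha
      have hall : ∀ x ∈ (0 : ℕ) :: t, x = 0 := by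
        intro x hx
        rcases List.mem_cons.mp hx with rfl | hx
        · rfl
        · exact Nat.le_zero.mp (List.rel_of_pairwise_cons hM hx)
      have h1 : ((0 : ℕ) :: t).filter (fun x => x ≠ 0) = [] := by
        rw [List.filter_eq_nil_iff]
        intro x hx
        simp [hall x hx]
      rw [h1]
      simp only [List.getD_nil]
      rcases Nat.lt_or_ge i (((0:ℕ) :: t).length) with hi | hi
      · rw [List.getD_eq_getElem _ _ hi]
        exact (hall _ (List.getElem_mem _)).symm
      · rw [List.getD_eq_default _ _ hi]
    · have h1 : (a :: t).filter (fun x => x ≠ 0) = a :: t.filter (fun x => x ≠ 0) := by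
        rw [List.filter_cons_of_pos (by simpa using ha)]
      rw [h1]
      cases i with
      | zero => simp
      | succ i =>
        rw [List.getD_cons_succ, List.getD_cons_succ]
        exact ih hM.of_cons i

lemma exists_partition (n K : ℕ) (g : ℕ → ℕ) (hg : Antitone g) (hK : ∀ i, K ≤ i → g i = 0)
    (hsum : ∑ i ∈ range K, g i = n) :
    ∃ lam : Nat.Partition n, ∀ i, padded lam i = g i := by
  set M : List ℕ := (List.range K).map g with hM
  have hMsorted : M.Pairwise (· ≥ ·) := by
    rw [hM, List.pairwise_map]
    exact (List.pairwise_lt_range (n := K)).imp (fun {a b} hab => hg (le_of_lt hab))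
  set F : List ℕ := M.filter (fun x => x ≠ 0) with hF
  have hFsorted : F.Pairwise (· ≥ ·) := hMsorted.sublist List.filter_sublist
  have hMsum : M.sum = n := by
    rw [hM, ← hsum]
    rw [← list_sum_getD]
    have hlen : ((List.range K).map g).length = K := by simp
    rw [hlen]
    apply Finset.sum_congr rfl
    intro i hi
    rw [Finset.mem_range] at hi
    rw [List.getD_eq_getElem _ _ (by simpa using hi)]
    simp
  have hFsum : F.sum = n := by
    rw [hF, ← hMsum]
    induction M with
    | nil => simp
    | cons a t ih =>
      by_cases ha : a = 0
      · subst ha; simpa using ih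
      · rw [List.filter_cons_of_pos (by simpa using ha), List.sum_cons, List.sum_cons, ih]
  have hpos : ∀ {i : ℕ}, i ∈ (F : Multiset ℕ) → 0 < i := by
    intro i hi
    have := List.of_mem_filter (Multiset.mem_coe.mp hi)
    have h2 : i ≠ 0 := by simpa using this
    omega
  refine ⟨⟨(F : Multiset ℕ), hpos, by simpa using hFsum⟩, ?_⟩
  · intro i
    have hsp : sortedParts (⟨(F : Multiset ℕ), hpos, by simpa using hFsum⟩ : Nat.Partition n) = F := by
      apply List.Perm.eq_of_pairwise' (sortedParts_sorted _) hFsorted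
      rw [← Multiset.coe_eq_coe]
      show (↑(Multiset.sort (↑F : Multiset ℕ) (· ≥ ·)) : Multiset ℕ) = _
      rw [Multiset.sort_eq]
    rw [padded, hsp, hF, filter_getD M hMsorted]
    rcases Nat.lt_or_ge i K with hi | hi
    · rw [List.getD_eq_getElem _ _ (by simpa [hM] using hi)]
      simp [hM]
    · rw [List.getD_eq_default _ _ (by simpa [hM] using hi), hK i hi]

noncomputable def phi (N : ℕ) {n : ℕ} (lam : Nat.Partition n) : ℕ →₀ ℕ :=
  Finsupp.onFinset (Finset.Icc 1 N)
    (fun m => if m ∈ Finset.Icc 1 N then m * (padded lam (m - 1) - padded lam m) else 0)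
    (fun m h => by by_contra hc; simp [hc] at h)

lemma phi_apply (N : ℕ) {n : ℕ} (lam : Nat.Partition n) (m : ℕ) :
    phi N lam m = if m ∈ Finset.Icc 1 N then m * (padded lam (m - 1) - padded lam m) else 0 := rfl

lemma phi_dvd (N : ℕ) {n : ℕ} (lam : Nat.Partition n) (m : ℕ) : m ∣ phi N lam m := by
  rw [phi_apply]
  split
  · exact Dvd.intro _ rfl
  · exact dvd_zero m

lemma phi_div (N : ℕ) {n : ℕ} (lam : Nat.Partition n) (m : ℕ) (hm : m ∈ Finset.Icc 1 N) :
    phi N lam m / m = padded lam (m - 1) - padded lam m := by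
  rw [phi_apply, if_pos hm]
  rw [Finset.mem_Icc] at hm
  exact Nat.mul_div_cancel_left _ (by omega)

lemma phi_sum (N : ℕ) {n : ℕ} (hN : n ≤ N) (lam : Nat.Partition n) :
    ∑ m ∈ Finset.Icc 1 N, phi N lam m = n := by
  have h1 : ∑ m ∈ Finset.Icc 1 N, phi N lam m
      = ∑ m ∈ Finset.Icc 1 N, m * (padded lam (m - 1) - padded lam m) := by
    apply Finset.sum_congr rfl
    intro m hm
    rw [phi_apply, if_pos hm]
  rw [h1]
  have h2 := abel_s (padded lam) (padded_antitone lam) N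
  rw [padded_eq_zero lam hN] at h2
  simpa [padded_sum lam hN] using h2

lemma phi_wsum (N : ℕ) {n : ℕ} (hN : n ≤ N) (lam : Nat.Partition n) :
    ∑ m ∈ Finset.Icc 1 N, (phi N lam m / m) * (m + 1).choose 2
      = ∑ i ∈ range (sortedParts lam).length, (i + 1) * (sortedParts lam).getD i 0 := by
  have h1 : ∑ m ∈ Finset.Icc 1 N, (phi N lam m / m) * (m + 1).choose 2
      = ∑ m ∈ Finset.Icc 1 N, (padded lam (m - 1) - padded lam m) * (m + 1).choose 2 := by
    apply Finset.sum_congr rfl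
    intro m hm
    rw [phi_div N lam m hm]
  rw [h1]
  have h2 := abel_w (padded lam) (padded_antitone lam) N
  rw [padded_eq_zero lam hN] at h2
  rw [padded_wsum lam (le_trans (sortedParts_length_le lam) hN)] at h2
  simpa using h2

lemma telescope (p : ℕ → ℕ) (hp : Antitone p) (N j : ℕ) (hj : j ≤ N) :
    (∑ m ∈ Finset.Icc (j + 1) N, (p (m - 1) - p m)) + p N = p j := by
  induction N with
  | zero =>
    interval_cases j
    simp
  | succ N ih =>
    rcases Nat.lt_or_ge j (N + 1) with hj' | hj'
    · have hjN : j ≤ N := by omega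
      rw [Finset.sum_Icc_succ_top (by omega)]
      have h3 := ih hjN
      have hb : p (N + 1) ≤ p N := hp (by omega)
      have h4 : N + 1 - 1 = N := by omega
      rw [h4]
      omega
    · have hjeq : j = N + 1 := by omega
      subst hjeq
      simp

-- reconstruction
lemma rec_eq_padded (N : ℕ) {n : ℕ} (hN : n ≤ N) (lam : Nat.Partition n) (i : ℕ) (hi : i ≤ N) :
    ∑ m ∈ Finset.Icc (i + 1) N, phi N lam m / m = padded lam i := by
  have h5 := telescope (padded lam) (padded_antitone lam) N i hi
  have h6 : ∑ m ∈ Finset.Icc (i + 1) N, phi N lam m / m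
      = ∑ m ∈ Finset.Icc (i + 1) N, (padded lam (m - 1) - padded lam m) := by
    apply Finset.sum_congr rfl
    intro m hm
    rw [Finset.mem_Icc] at hm
    exact phi_div N lam m (Finset.mem_Icc.mpr ⟨by omega, hm.2⟩)
  rw [h6]
  rw [padded_eq_zero lam hN] at h5
  simpa using h5

lemma phi_surj (N : ℕ) {n : ℕ} (hN : n ≤ N) (l : ℕ →₀ ℕ)
    (hsupp : l.support ⊆ Finset.Icc 1 N) (hsum : ∑ m ∈ Finset.Icc 1 N, l m = n)
    (hdvd : ∀ m ∈ Finset.Icc 1 N, m ∣ l m) :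
    ∃ lam : Nat.Partition n, phi N lam = l := by
  set g : ℕ → ℕ := fun i => ∑ m ∈ Finset.Icc (i + 1) N, l m / m with hg
  have hfilter : ∀ i : ℕ, (Finset.Icc 1 N).filter (fun m => i < m) = Finset.Icc (i + 1) N := by
    intro i
    ext m
    simp only [Finset.mem_filter, Finset.mem_Icc]
    omega
  have hganti : Antitone g := by
    intro i j hij
    apply Finset.sum_le_sum_of_subset
    intro m hm
    rw [Finset.mem_Icc] at hm ⊢
    omega
  have hgzero : ∀ i, N ≤ i → g i = 0 := by
    intro i hi
    rw [hg]
    simp only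
    rw [Finset.Icc_eq_empty (by omega), Finset.sum_empty]
  have hgsum : ∑ i ∈ range N, g i = n := by
    have h1 : ∀ i, g i = ∑ m ∈ Finset.Icc 1 N, if i < m then l m / m else 0 := by
      intro i
      rw [← Finset.sum_filter, hfilter]
    calc ∑ i ∈ range N, g i
        = ∑ i ∈ range N, ∑ m ∈ Finset.Icc 1 N, (if i < m then l m / m else 0) := by
          exact Finset.sum_congr rfl fun i _ => h1 i
      _ = ∑ m ∈ Finset.Icc 1 N, ∑ i ∈ range N, (if i < m then l m / m else 0) :=
          Finset.sum_comm
      _ = ∑ m ∈ Finset.Icc 1 N, m * (l m / m) := by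
          apply Finset.sum_congr rfl
          intro m hm
          rw [Finset.mem_Icc] at hm
          rw [← Finset.sum_filter]
          have h2 : (range N).filter (fun i => i < m) = range m := by
            ext i
            simp only [Finset.mem_filter, Finset.mem_range]
            omega
          rw [h2, Finset.sum_const, Finset.card_range, smul_eq_mul]
      _ = ∑ m ∈ Finset.Icc 1 N, l m := by
          apply Finset.sum_congr rfl
          intro m hm
          exact Nat.mul_div_cancel' (hdvd m hm)
      _ = n := hsum
  obtain ⟨lam, hlam⟩ := exists_partition n N g hganti hgzero hgsum
  refine ⟨lam, ?_⟩
  ext m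
  rw [phi_apply]
  by_cases hm : m ∈ Finset.Icc 1 N
  · rw [if_pos hm, hlam, hlam]
    rw [Finset.mem_Icc] at hm
    have hins : Finset.Icc m N = insert m (Finset.Icc (m + 1) N) := by
      ext x
      simp only [Finset.mem_insert, Finset.mem_Icc]
      omega
    have hm1 : m - 1 + 1 = m := by omega
    have hstep : g (m - 1) = l m / m + g m := by
      rw [hg]
      simp only
      rw [hm1, hins, Finset.sum_insert (by rw [Finset.mem_Icc]; omega)]
    rw [hstep, Nat.add_sub_cancel]
    exact Nat.mul_div_cancel' (hdvd m (Finset.mem_Icc.mpr hm))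
  · rw [if_neg hm]
    by_contra hc
    exact hm (hsupp (Finsupp.mem_support_iff.mpr fun h => hc h.symm))

lemma phi_inj (N : ℕ) {n : ℕ} (hN : n ≤ N) (lam lam' : Nat.Partition n)
    (h : phi N lam = phi N lam') : lam = lam' := by
  apply padded_inj
  intro i
  rcases Nat.lt_or_ge N i with hi | hi
  · rw [padded_eq_zero lam (by omega), padded_eq_zero lam' (by omega)]
  · rw [← rec_eq_padded N hN lam i hi, ← rec_eq_padded N hN lam' i hi, h]

lemma wsum_bound {n : ℕ} (lam : Nat.Partition n) :
    ∑ i ∈ range (sortedParts lam).length, (i + 1) * (sortedParts lam).getD i 0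
      ≤ (n + 1).choose 2 := by
  have h1 := wsum_le (padded lam) (padded_antitone lam) n
  rw [padded_sum lam le_rfl] at h1
  rw [← padded_wsum lam (sortedParts_length_le lam)]
  exact h1

lemma gini_eq {n : ℕ} (lam : Nat.Partition n) :
    (n + 1).choose 2 - gini lam
      = ∑ i ∈ range (sortedParts lam).length, (i + 1) * (sortedParts lam).getD i 0 := by
  rw [gini]
  have := wsum_bound lam
  omega

/-- In `ℤ[q][[x]]`,
`∏_{m≥1} (1 − q^{C(m+1,2)} x^m)^{-1} − 1 = Σ_{n≥1} (Σ_{λ ⊢ n} q^{C(n+1,2) − g(λ)}) x^n`;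
equivalently, for every `n ≥ 1` the coefficient of `x^n` in the infinite product (which
is already captured by any finite truncation `∏_{m=1}^{N}` with `N ≥ n`) equals
`Σ_{λ ⊢ n} q^{C(n+1,2) − g(λ)}`. -/
theorem gini_stmt5 (n : ℕ) (hn : 0 < n) (N : ℕ) (hN : n ≤ N) :
    PowerSeries.coeff (R := Polynomial ℤ) n (∏ m ∈ Finset.Icc 1 N, ginFactorInv m)
      = ∑ lam : Nat.Partition n,
          (Polynomial.X : Polynomial ℤ) ^ ((n + 1).choose 2 - gini lam) := by
  classical
  have hprod : ∏ m ∈ Finset.Icc 1 N, ginFactorInv m = ∏ m ∈ Finset.Icc 1 N, ginSeries m := by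
    apply Finset.prod_congr rfl
    intro m hm
    rw [Finset.mem_Icc] at hm
    exact ginFactorInv_eq m (by omega)
  rw [hprod, PowerSeries.coeff_prod]
  have hterm : ∀ (l : ℕ →₀ ℕ) (m : ℕ), (PowerSeries.coeff (R := Polynomial ℤ) (l m)) (ginSeries m)
      = if m ∣ l m then (Polynomial.X : Polynomial ℤ) ^ ((l m / m) * (m + 1).choose 2) else 0 :=
    fun l m => PowerSeries.coeff_mk _ _
  have hp : ∀ l ∈ Finset.finsuppAntidiag (Finset.Icc 1 N) n,
      (∏ m ∈ Finset.Icc 1 N, (PowerSeries.coeff (R := Polynomial ℤ) (l m)) (ginSeries m)) ≠ 0 →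
        ∀ m ∈ Finset.Icc 1 N, m ∣ l m := by
    intro l _ hne
    by_contra hc
    push_neg at hc
    obtain ⟨m, hm, hdm⟩ := hc
    exact hne (Finset.prod_eq_zero hm (by rw [hterm, if_neg hdm]))
  rw [← Finset.sum_filter_of_ne hp]
  refine (Finset.sum_bij (fun (lam : Nat.Partition n) _ => phi N lam) ?_ ?_ ?_ ?_).symm
  · intro lam _
    rw [Finset.mem_filter]
    constructor
    · rw [Finset.mem_finsuppAntidiag]
      exact ⟨phi_sum N hN lam, Finsupp.support_onFinset_subset⟩
    · exact fun m _ => phi_dvd N lam m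
  · intro lam1 _ lam2 _ h
    exact phi_inj N hN lam1 lam2 h
  · intro b hb
    rw [Finset.mem_filter, Finset.mem_finsuppAntidiag] at hb
    obtain ⟨⟨hbsum, hbsupp⟩, hbdvd⟩ := hb
    obtain ⟨lam, hlam⟩ := phi_surj N hN b hbsupp hbsum hbdvd
    exact ⟨lam, Finset.mem_univ _, hlam⟩
  · intro lam _
    have h1 : ∏ m ∈ Finset.Icc 1 N,
        (PowerSeries.coeff (R := Polynomial ℤ) (phi N lam m)) (ginSeries m)
        = ∏ m ∈ Finset.Icc 1 N,
            (Polynomial.X : Polynomial ℤ) ^ ((phi N lam m / m) * (m + 1).choose 2) := by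
      apply Finset.prod_congr rfl
      intro m _
      rw [hterm, if_pos (phi_dvd N lam m)]
    rw [h1, Finset.prod_pow_eq_pow_sum, phi_wsum N hN lam, gini_eq]
end
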